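/- Let W, A ∈ ℝ^{p_1×p_2} with rank(A) ≤ r and rank(W) = r″, and let r, r′ be integers with r < r′ < r″. Let P_{r′}(W) denote a best rank-r′ approximation of W in Frobenius norm (truncated singular value decomposition keeping the r′ largest singular values). Then ‖P_{r′}(W) − W‖_F² ≤ ((r″ − r′)/(r″ − r))·‖A − W‖_F². -/

import Mathlib

open scoped BigOperators
open MeasureTheory ProbabilityTheory Filter

namespace TTpaper

/-- A real tensor of order `d` with dimension vector `p`. -/
abbrev Tensor {d : ℕ} (p : Fin d → ℕ) : Type := ((k : Fin d) → Fin (p k)) → ℝ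

/-- Frobenius norm of a tensor. -/
noncomputable def fnorm {d : ℕ} {p : Fin d → ℕ} (X : Tensor p) : ℝ :=
  Real.sqrt (∑ i, X i ^ 2)

/-- Inner product of two tensors of the same size (sum of entrywise products). -/
noncomputable def tinner {d : ℕ} {p : Fin d → ℕ} (X Y : Tensor p) : ℝ :=
  ∑ i, X i * Y i

/-- The `k`-th sequential matricization of a tensor: rows enumerate the indices of
modes `1,…,k` and columns enumerate the indices of modes `k+1,…,d`. -/
def seqMat {d : ℕ} (p : Fin d → ℕ) (k : ℕ) (X : Tensor p) :
    Matrix ((j : {j : Fin d // j.val < k}) → Fin (p j.1))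
      ((j : {j : Fin d // ¬ j.val < k}) → Fin (p j.1)) ℝ :=
  fun a b => X fun j => if h : j.val < k then a ⟨j, h⟩ else b ⟨j, h⟩

/-- The entries of the tensor-train chain product
`G_1(i_1) G_2(i_2) ⋯ G_d(i_d)`, written as a sum over all bond indices. -/
noncomputable def ttEntry {d : ℕ} (p : Fin d → ℕ) (r : Fin (d + 1) → ℕ)
    (G : (k : Fin d) → Fin (p k) → Fin (r k.castSucc) → Fin (r k.succ) → ℝ) : Tensor p :=
  fun i => ∑ a : (j : Fin (d + 1)) → Fin (r j),
    ∏ k : Fin d, G k (i k) (a k.castSucc) (a k.succ)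

/-- `X` is in tensor-train format with bond dimension vector `r`
(whose boundary entries equal `1`). -/
def IsTT {d : ℕ} (p : Fin d → ℕ) (r : Fin (d + 1) → ℕ) (X : Tensor p) : Prop :=
  r 0 = 1 ∧ r (Fin.last d) = 1 ∧ ∃ G, X = ttEntry p r G

/-- Merge an index for the first `n` modes and an index for the last `m` modes into
an index for a tensor with appended dimension vector. -/
def splice {n m : ℕ} {q : Fin n → ℕ} {p : Fin m → ℕ}
    (a : (j : Fin n) → Fin (q j)) (b : (i : Fin m) → Fin (p i)) :
    (j : Fin (n + m)) → Fin (Fin.append q p j) :=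
  Fin.addCases (motive := fun j => Fin (Fin.append q p j))
    (fun i => Fin.cast (Fin.append_left q p i).symm (a i))
    (fun i => Fin.cast (Fin.append_right q p i).symm (b i))

/-- The part of an index of an appended tensor corresponding to the first block of modes. -/
def unleft {n m : ℕ} {q : Fin n → ℕ} {p : Fin m → ℕ}
    (idx : (j : Fin (n + m)) → Fin (Fin.append q p j)) (i : Fin n) : Fin (q i) :=
  Fin.cast (Fin.append_left q p i) (idx (Fin.castAdd m i))

/-- The part of an index of an appended tensor corresponding to the second block of modes. -/
def unright {n m : ℕ} {q : Fin n → ℕ} {p : Fin m → ℕ}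
    (idx : (j : Fin (n + m)) → Fin (Fin.append q p j)) (i : Fin m) : Fin (p i) :=
  Fin.cast (Fin.append_right q p i) (idx (Fin.natAdd n i))

/-- Generalized inner product `⟨A, X⟩` of a coefficient tensor
`A ∈ ℝ^{q_1×⋯×q_n×p_1×⋯×p_m}` with a tensor `X ∈ ℝ^{p_1×⋯×p_m}`. -/
noncomputable def ginner {n m : ℕ} {q : Fin n → ℕ} {p : Fin m → ℕ}
    (A : Tensor (Fin.append q p)) (X : Tensor p) : Tensor q :=
  fun j => ∑ i, A (splice j i) * X i

/-- The matricization of an appended tensor separating the two blocks of modes. -/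
def gmat {n m : ℕ} {q : Fin n → ℕ} {p : Fin m → ℕ} (A : Tensor (Fin.append q p)) :
    Matrix ((j : Fin n) → Fin (q j)) ((i : Fin m) → Fin (p i)) ℝ :=
  fun a b => A (splice a b)

/-- The rearrangement `M(A)` of an appended tensor reversing the order of the
modes of its second block. -/
def modeRev {n m : ℕ} {q : Fin n → ℕ} {p : Fin m → ℕ} (A : Tensor (Fin.append q p)) :
    Tensor (Fin.append q (fun i => p i.rev)) :=
  fun idx => A (splice (unleft idx)
    (fun i => Fin.cast (congrArg p (Fin.rev_rev i)) (unright idx i.rev)))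

/-- Convert a row index of the `n`-th sequential matricization of an appended tensor
into an index over the first block of modes. -/
def unrow {n m : ℕ} {q : Fin n → ℕ} {p : Fin m → ℕ}
    (a : (j : {j : Fin (n + m) // j.val < n}) → Fin (Fin.append q p j.1)) (j : Fin n) :
    Fin (q j) :=
  Fin.cast (Fin.append_left q p j) (a ⟨Fin.castAdd m j, j.isLt⟩)

/-- Convert a column index of the `n`-th sequential matricization of an appended tensor
into an index over the second block of modes. -/
def uncol {n m : ℕ} {q : Fin n → ℕ} {p : Fin m → ℕ}
    (b : (j : {j : Fin (n + m) // ¬ j.val < n}) → Fin (Fin.append q p j.1)) (i : Fin m) :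
    Fin (p i) :=
  Fin.cast (Fin.append_right q p i)
    (b ⟨Fin.natAdd n i, Nat.not_lt.mpr (Nat.le_add_right n i.val)⟩)

/-- Dimension vector `(L, p_1, …, p_d)` of a stacked tensor. -/
def consDim {d : ℕ} (L : ℕ) (p : Fin d → ℕ) : Fin (d + 1) → ℕ :=
  Fin.cons (α := fun _ => ℕ) L p

/-- Head (lag) component of an index of a stacked tensor with dimensions `(L, p_1, …, p_d)`. -/
def headIdx {d L : ℕ} {p : Fin d → ℕ}
    (idx : (j : Fin (d + 1)) → Fin (consDim L p j)) : Fin L :=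
  Fin.cast (Fin.cons_zero (α := fun _ => ℕ) L p) (idx 0)

/-- Tail component of an index of a stacked tensor with dimensions `(L, p_1, …, p_d)`. -/
def tailIdx {d L : ℕ} {p : Fin d → ℕ}
    (idx : (j : Fin (d + 1)) → Fin (consDim L p j)) (k : Fin d) : Fin (p k) :=
  Fin.cast (Fin.cons_succ (α := fun _ => ℕ) L p k) (idx k.succ)

/-- Build an index of a stacked tensor with dimensions `(L, p_1, …, p_d)` from a lag
and an index over `(p_1, …, p_d)`. -/
def consIdx {d L : ℕ} {p : Fin d → ℕ} (h : Fin L) (b : (k : Fin d) → Fin (p k)) :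
    (j : Fin (d + 1)) → Fin (consDim L p j) :=
  fun j => Fin.cases (motive := fun j => Fin (consDim L p j))
    (Fin.cast (Fin.cons_zero (α := fun _ => ℕ) L p).symm h)
    (fun k => Fin.cast (Fin.cons_succ (α := fun _ => ℕ) L p k).symm (b k)) j

/-- The `j`-th lag coefficient tensor `A_j` sliced out of a stacked coefficient tensor
`A_{1:p} ∈ ℝ^{p_1×⋯×p_d×L×p_1×⋯×p_d}`. -/
def lagSlice {d L : ℕ} {p : Fin d → ℕ}
    (A : Tensor (Fin.append p (consDim L p))) (h : Fin L) :
    Tensor (Fin.append p p) :=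
  fun idx => A (splice (unleft idx) (consIdx h (unright idx)))

/-- Squared Frobenius norm of a matrix. -/
noncomputable def mfnormSq {I J : Type*} [Fintype I] [Fintype J] (M : Matrix I J ℝ) : ℝ :=
  ∑ i, ∑ j, M i j ^ 2

/-- Frobenius norm of a matrix. -/
noncomputable def mfnorm {I J : Type*} [Fintype I] [Fintype J] (M : Matrix I J ℝ) : ℝ :=
  Real.sqrt (mfnormSq M)

/-- The minimal squared Frobenius distance of `M` to the matrices of rank at most `k`,
i.e. the sum of its squared singular values of index `> k`. -/
noncomputable def tailSq {I J : Type*} [Fintype I] [Fintype J]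
    (M : Matrix I J ℝ) (k : ℕ) : ℝ :=
  sInf {x | ∃ C : Matrix I J ℝ, C.rank ≤ k ∧ x = mfnormSq (M - C)}

/-- The `r`-th largest singular value of a matrix (for `r ≥ 1`). -/
noncomputable def singval {I J : Type*} [Fintype I] [Fintype J]
    (M : Matrix I J ℝ) (r : ℕ) : ℝ :=
  Real.sqrt (tailSq M (r - 1) - tailSq M r)

/-- The set of Rayleigh-quotient values `re(v* Ā(z)A(z) v)` over unit `z ∈ ℂ` and unit
vectors `v`; its infimum is `μ_min` and its supremum is `μ_max` of the matrix
polynomial `A(z) = Φ z`. -/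
noncomputable def muQuadSet {I : Type*} [Fintype I] (Φ : ℂ → Matrix I I ℂ) : Set ℝ :=
  {x | ∃ z : ℂ, ‖z‖ = 1 ∧ ∃ v : I → ℂ, (∑ i, Complex.normSq (v i)) = 1 ∧
    x = (dotProduct (star v) (((Φ z).conjTranspose * Φ z).mulVec v)).re}

/-- The matrix polynomial `A(z) = I - z·A` of a lag-one autoregression. -/
noncomputable def arPoly {I : Type*} [Fintype I] [DecidableEq I]
    (M : Matrix I I ℝ) (z : ℂ) : Matrix I I ℂ :=
  1 - z • M.map (Complex.ofReal)

/-- `μ_min` of a lag-one autoregression coefficient matrix. -/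
noncomputable def muMin {I : Type*} [Fintype I] [DecidableEq I] (M : Matrix I I ℝ) : ℝ :=
  sInf (muQuadSet (arPoly M))

/-- `μ_max` of a lag-one autoregression coefficient matrix. -/
noncomputable def muMax {I : Type*} [Fintype I] [DecidableEq I] (M : Matrix I I ℝ) : ℝ :=
  sSup (muQuadSet (arPoly M))

/-- All complex eigenvalues of the real matrix `M` have modulus `< 1`
(spectral radius strictly less than one). -/
def SpecLT1 {I : Type*} [Fintype I] [DecidableEq I] (M : Matrix I I ℝ) : Prop :=
  ∀ z ∈ spectrum ℂ (M.map (Complex.ofReal)), ‖z‖ < 1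

/-- A random vector is `c`-sub-Gaussian: its moment generating function satisfies
`E exp⟨u, x⟩ ≤ exp(c‖u‖²/2)` for all `u`. -/
def SubGVec {Ω : Type*} [MeasurableSpace Ω] (μ : Measure Ω) {I : Type*} [Fintype I]
    (c : ℝ) (x : Ω → I → ℝ) : Prop :=
  ∀ u : I → ℝ, ∫ ω, Real.exp (∑ i, u i * x ω i) ∂μ ≤ Real.exp (c * (∑ i, u i ^ 2) / 2)

/-- A random variable is `c`-sub-Gaussian. -/
def SubGScalar {Ω : Type*} [MeasurableSpace Ω] (μ : Measure Ω) (c : ℝ) (ξ : Ω → ℝ) : Prop :=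
  ∀ u : ℝ, ∫ ω, Real.exp (u * ξ ω) ∂μ ≤ Real.exp (c * u ^ 2 / 2)

/-- Extend an interior rank vector `(r_1, …, r_K)` to all integer indices, with the
boundary ranks equal to `1`. -/
def extRank {K : ℕ} (R : Fin K → ℕ) (k : ℕ) : ℕ :=
  if h : 1 ≤ k ∧ k ≤ K then R ⟨k - 1, by omega⟩ else 1

/-! ### Auxiliary material for Statement 12 -/

section Statement12Aux

open Finset Matrix

private lemma card_filter_val_lt {N m : ℕ} (hm : m ≤ N) :
    ((Finset.univ : Finset (Fin N)).filter (fun i => i.val < m)).card = m := by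
  apply Finset.card_eq_of_bijective (fun j hj => (⟨j, by omega⟩ : Fin N))
  · intro a ha
    simp only [Finset.mem_filter, Finset.mem_univ, true_and] at ha
    exact ⟨a.1, ha, by simp⟩
  · intro i hi
    simp only [Finset.mem_filter, Finset.mem_univ, true_and]
    exact hi
  · intro i j hi hj h
    simpa [Fin.ext_iff] using h

private lemma card_filter_ico {N a b : ℕ} (hab : a ≤ b) (hb : b ≤ N) :
    (Finset.univ.filter (fun i : Fin N => a ≤ i.val ∧ i.val < b)).card = b - a := by
  have h : Finset.univ.filter (fun i : Fin N => a ≤ i.val ∧ i.val < b)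
      = (Finset.univ.filter (fun i : Fin N => i.val < b))
          \ (Finset.univ.filter (fun i : Fin N => i.val < a)) := by
    ext i; simp only [Finset.mem_filter, Finset.mem_univ, true_and, Finset.mem_sdiff]; omega
  have hsub : (Finset.univ.filter (fun i : Fin N => i.val < a))
      ⊆ (Finset.univ.filter (fun i : Fin N => i.val < b)) := by
    intro i hi
    simp only [Finset.mem_filter, Finset.mem_univ, true_and] at hi ⊢; omega
  rw [h, Finset.card_sdiff_of_subset hsub, card_filter_val_lt hb, card_filter_val_lt (le_trans hab hb)]

private lemma sum_filter_split {N a b : ℕ} (hab : a ≤ b) (f : Fin N → ℝ) :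
    ∑ i ∈ Finset.univ.filter (fun i : Fin N => i.val < b), f i
      = (∑ i ∈ Finset.univ.filter (fun i : Fin N => i.val < a), f i)
        + ∑ i ∈ Finset.univ.filter (fun i : Fin N => a ≤ i.val ∧ i.val < b), f i := by
  rw [← Finset.sum_filter_add_sum_filter_not
    (Finset.univ.filter (fun i : Fin N => i.val < b)) (fun i => i.val < a)]
  congr 1
  · congr 1
    ext i
    simp only [Finset.mem_filter, Finset.mem_univ, true_and, Finset.filter_filter]
    omega
  · congr 1
    ext i
    simp only [Finset.mem_filter, Finset.mem_univ, true_and, Finset.filter_filter]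
    omega

/-- The key combinatorial inequality: if `ν` is monotone nonnegative and the weights
`c i ∈ [0,1]` have total mass at least `m`, then `∑ ν i * c i` is at least the sum of
the `m` smallest values of `ν`. -/
private lemma comb_ineq {N : ℕ} (ν c : Fin N → ℝ) (hmono : Monotone ν)
    (hν : ∀ i, 0 ≤ ν i) (hc0 : ∀ i, 0 ≤ c i) (hc1 : ∀ i, c i ≤ 1) (m : ℕ) (hm : m ≤ N)
    (hsum : (m : ℝ) ≤ ∑ i, c i) :
    ∑ i ∈ Finset.univ.filter (fun i : Fin N => i.val < m), ν i ≤ ∑ i, ν i * c i := by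
  rcases Nat.eq_zero_or_pos m with h0 | hpos
  · subst h0
    have h1 : (Finset.univ.filter (fun i : Fin N => i.val < 0)) = ∅ := by
      ext i; simp
    rw [h1, Finset.sum_empty]
    exact Finset.sum_nonneg fun i _ => mul_nonneg (hν i) (hc0 i)
  · have hm1 : m - 1 < N := by omega
    set θ := ν ⟨m - 1, hm1⟩ with hθ
    have hθ0 : 0 ≤ θ := hν _
    have key : ∀ i : Fin N, (if i.val < m then ν i else 0)
        ≤ ν i * c i - θ * c i + θ * (if i.val < m then 1 else 0) := by
      intro i
      by_cases h : i.val < m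
      · have hle : ν i ≤ θ := hmono (by rw [Fin.le_def]; simp; omega)
        simp only [h, if_pos]
        nlinarith [hc0 i, hc1 i]
      · have hge : θ ≤ ν i := hmono (by rw [Fin.le_def]; simp; omega)
        simp only [h, if_neg, not_false_iff]
        nlinarith [hc0 i]
    have hcard : ∑ i : Fin N, (if i.val < m then (1:ℝ) else 0) = m := by
      rw [Finset.sum_boole, card_filter_val_lt hm]
    calc ∑ i ∈ Finset.univ.filter (fun i : Fin N => i.val < m), ν i
        = ∑ i : Fin N, (if i.val < m then ν i else 0) := by
          rw [Finset.sum_filter]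
      _ ≤ ∑ i : Fin N, (ν i * c i - θ * c i + θ * (if i.val < m then 1 else 0)) :=
          Finset.sum_le_sum fun i _ => key i
      _ = (∑ i, ν i * c i) - θ * (∑ i, c i) + θ * m := by
          rw [Finset.sum_add_distrib, Finset.sum_sub_distrib, ← Finset.mul_sum,
            ← Finset.mul_sum, hcard]
      _ ≤ ∑ i, ν i * c i := by nlinarith [mul_le_mul_of_nonneg_left hsum hθ0]

private lemma inner_eq_dot {n : ℕ} (x y : EuclideanSpace ℝ (Fin n)) :
    (inner ℝ x y : ℝ) = ∑ b, x b * y b := by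
  simp [PiLp.inner_apply, RCLike.inner_apply, conj_trivial]
  exact Finset.sum_congr rfl fun _ _ => mul_comm _ _

private lemma parseval_sq {n : ℕ} (b : OrthonormalBasis (Fin n) ℝ (EuclideanSpace ℝ (Fin n)))
    (x : EuclideanSpace ℝ (Fin n)) :
    ∑ i, (inner ℝ (b i) x : ℝ) ^ 2 = ∑ j, x j ^ 2 := by
  have h2 : (inner ℝ (b.repr x) (b.repr x) : ℝ) = (inner ℝ x x : ℝ) := b.repr.inner_map_map x x
  rw [inner_eq_dot, inner_eq_dot] at h2
  calc ∑ i, (inner ℝ (b i) x : ℝ) ^ 2 = ∑ i, (b.repr x) i * (b.repr x) i := by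
        refine Finset.sum_congr rfl fun i _ => ?_
        rw [b.repr_apply_apply, pow_two]
    _ = ∑ j, x j * x j := h2
    _ = ∑ j, x j ^ 2 := by simp [pow_two]

private lemma parseval_inner {n : ℕ} (b : OrthonormalBasis (Fin n) ℝ (EuclideanSpace ℝ (Fin n)))
    (x y : EuclideanSpace ℝ (Fin n)) :
    (inner ℝ x y : ℝ) = ∑ i, (inner ℝ (b i) x : ℝ) * (inner ℝ (b i) y : ℝ) := by
  calc (inner ℝ x y : ℝ) = (inner ℝ (b.repr x) (b.repr y) : ℝ) := (b.repr.inner_map_map x y).symm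
    _ = ∑ i, (b.repr x) i * (b.repr y) i := inner_eq_dot _ _
    _ = ∑ i, (inner ℝ (b i) x : ℝ) * (inner ℝ (b i) y : ℝ) := by
        refine Finset.sum_congr rfl fun i _ => ?_
        rw [b.repr_apply_apply, b.repr_apply_apply]

private lemma bessel_sq {n m : ℕ} {u : Fin m → EuclideanSpace ℝ (Fin n)}
    (hu : Orthonormal ℝ u) (x : EuclideanSpace ℝ (Fin n)) :
    ∑ j, (inner ℝ (u j) x : ℝ) ^ 2 ≤ ∑ b, x b ^ 2 := by
  have h := hu.sum_inner_products_le (s := Finset.univ) x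
  have hn : ‖x‖ ^ 2 = ∑ b, x b ^ 2 := by
    rw [EuclideanSpace.norm_eq, Real.sq_sqrt (by positivity)]
    simp [sq_abs]
  rw [hn] at h
  simpa [sq_abs] using h

private lemma mulVec_apply_eq_inner {p₁ n : ℕ} (M : Matrix (Fin p₁) (Fin n) ℝ)
    (x : EuclideanSpace ℝ (Fin n)) (a : Fin p₁) :
    M.mulVec x a = (inner ℝ (WithLp.toLp 2 (M a)) x : ℝ) := by
  rw [inner_eq_dot]; rfl

private lemma sum_sq_mulVec_le {p₁ n m : ℕ} (M : Matrix (Fin p₁) (Fin n) ℝ)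
    {u : Fin m → EuclideanSpace ℝ (Fin n)} (hu : Orthonormal ℝ u) :
    ∑ j, ∑ a, (M.mulVec (u j)) a ^ 2 ≤ mfnormSq M := by
  rw [Finset.sum_comm]
  unfold mfnormSq
  refine Finset.sum_le_sum fun a _ => ?_
  calc ∑ j, M.mulVec (u j) a ^ 2
      = ∑ j, (inner ℝ (u j) (WithLp.toLp 2 (M a)) : ℝ) ^ 2 := by
        refine Finset.sum_congr rfl fun j _ => ?_
        rw [mulVec_apply_eq_inner, real_inner_comm]
    _ ≤ ∑ b, M a b ^ 2 := bessel_sq hu _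

private lemma sum_sq_mulVec_eq {p₁ n : ℕ} (M : Matrix (Fin p₁) (Fin n) ℝ)
    (b : OrthonormalBasis (Fin n) ℝ (EuclideanSpace ℝ (Fin n))) :
    ∑ j, ∑ a, (M.mulVec (b j)) a ^ 2 = mfnormSq M := by
  rw [Finset.sum_comm]
  unfold mfnormSq
  refine Finset.sum_congr rfl fun a _ => ?_
  calc ∑ j, M.mulVec (b j) a ^ 2
      = ∑ j, (inner ℝ (b j) (WithLp.toLp 2 (M a)) : ℝ) ^ 2 := by
        refine Finset.sum_congr rfl fun j _ => ?_
        rw [mulVec_apply_eq_inner, real_inner_comm]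
    _ = ∑ bb, M a bb ^ 2 := parseval_sq b _

private lemma dot_sq_eq {p₁ n : ℕ} (W : Matrix (Fin p₁) (Fin n) ℝ) (x : Fin n → ℝ) :
    ∑ a, (W.mulVec x) a ^ 2 = x ⬝ᵥ ((Wᴴ * W).mulVec x) := by
  have h1 : x ⬝ᵥ ((Wᴴ * W).mulVec x) = (W.mulVec x) ⬝ᵥ (W.mulVec x) := by
    rw [← Matrix.mulVec_mulVec, Matrix.dotProduct_mulVec]
    congr 1
    have hT : Wᴴ = Wᵀ := by
      ext a b; simp [Matrix.conjTranspose_apply]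
    rw [hT, Matrix.vecMul_transpose]
  rw [h1]
  simp [dotProduct, pow_two]

section SortedSpectrum

variable {p₁ n : ℕ} (W : Matrix (Fin p₁) (Fin n) ℝ)

private noncomputable def sortPerm : Equiv.Perm (Fin n) :=
  Tuple.sort (Matrix.isHermitian_conjTranspose_mul_self W).eigenvalues

private noncomputable def sEig : Fin n → ℝ :=
  fun i => (Matrix.isHermitian_conjTranspose_mul_self W).eigenvalues (sortPerm W i)

private noncomputable def sBasis : OrthonormalBasis (Fin n) ℝ (EuclideanSpace ℝ (Fin n)) :=
  (Matrix.isHermitian_conjTranspose_mul_self W).eigenvectorBasis.reindex (sortPerm W).symm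

private lemma sBasis_apply (i : Fin n) :
    sBasis W i = (Matrix.isHermitian_conjTranspose_mul_self W).eigenvectorBasis (sortPerm W i) := by
  simp [sBasis, OrthonormalBasis.reindex_apply]

private lemma sEig_mono : Monotone (sEig W) :=
  Tuple.monotone_sort (Matrix.isHermitian_conjTranspose_mul_self W).eigenvalues

private lemma mulVec_sBasis (i : Fin n) :
    (Wᴴ * W).mulVec (sBasis W i) = sEig W i • (sBasis W i : EuclideanSpace ℝ (Fin n)) := by
  rw [sBasis_apply]
  exact (Matrix.isHermitian_conjTranspose_mul_self W).mulVec_eigenvectorBasis (sortPerm W i)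

private lemma sBasis_dot (i j : Fin n) :
    ∑ b, (sBasis W i) b * (sBasis W j) b = if i = j then 1 else 0 := by
  have h := orthonormal_iff_ite.mp (sBasis W).orthonormal i j
  rw [inner_eq_dot] at h
  simpa using h

private lemma sEig_eq (i : Fin n) :
    ∑ a, (W.mulVec (sBasis W i)) a ^ 2 = sEig W i := by
  rw [dot_sq_eq, mulVec_sBasis]
  have hx : (sBasis W i : Fin n → ℝ) ⬝ᵥ (sEig W i • (sBasis W i : Fin n → ℝ))
      = sEig W i * ((sBasis W i : Fin n → ℝ) ⬝ᵥ (sBasis W i : Fin n → ℝ)) := by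
    rw [dotProduct_smul]; simp [smul_eq_mul]
  rw [hx]
  have h1 : (sBasis W i : Fin n → ℝ) ⬝ᵥ (sBasis W i : Fin n → ℝ) = 1 := by
    have := sBasis_dot W i i
    simpa [dotProduct] using this
  rw [h1, mul_one]

private lemma sEig_nonneg (i : Fin n) : 0 ≤ sEig W i := by
  rw [← sEig_eq]
  positivity

private lemma quad_expand (x : EuclideanSpace ℝ (Fin n)) :
    ∑ a, (W.mulVec x) a ^ 2 = ∑ i, sEig W i * (inner ℝ (sBasis W i) x : ℝ) ^ 2 := by
  rw [dot_sq_eq]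
  have key : ∀ i : Fin n,
      (inner ℝ (sBasis W i) (WithLp.toLp 2 ((Wᴴ * W).mulVec x)) : ℝ)
        = sEig W i * (inner ℝ (sBasis W i) x : ℝ) := by
    intro i
    rw [inner_eq_dot, inner_eq_dot]
    have hswap : (sBasis W i : Fin n → ℝ) ⬝ᵥ ((Wᴴ * W).mulVec x)
        = ((Wᴴ * W).mulVec (sBasis W i)) ⬝ᵥ x := by
      rw [Matrix.dotProduct_mulVec]
      congr 1
      have hH := Matrix.isHermitian_conjTranspose_mul_self W
      have hsym : (Wᴴ * W)ᵀ = Wᴴ * W := by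
        ext a b
        rw [Matrix.transpose_apply]
        conv_lhs => rw [← hH.eq]
        simp [Matrix.conjTranspose_apply]
      conv_lhs => rw [← hsym]
      rw [Matrix.vecMul_transpose]
    calc ∑ b, (sBasis W i) b * ((Wᴴ * W).mulVec x) b
        = (sBasis W i : Fin n → ℝ) ⬝ᵥ ((Wᴴ * W).mulVec x) := rfl
      _ = ((Wᴴ * W).mulVec (sBasis W i)) ⬝ᵥ x := hswap
      _ = (sEig W i • (sBasis W i : Fin n → ℝ)) ⬝ᵥ x := by rw [mulVec_sBasis]
      _ = sEig W i * ∑ b, (sBasis W i) b * x b := by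
          rw [smul_dotProduct]; simp [smul_eq_mul, dotProduct]
  calc x ⬝ᵥ ((Wᴴ * W).mulVec x)
      = (inner ℝ (show EuclideanSpace ℝ (Fin n) from x)
          (WithLp.toLp 2 ((Wᴴ * W).mulVec x)) : ℝ) := by
        rw [inner_eq_dot]; rfl
    _ = ∑ i, (inner ℝ (sBasis W i) (show EuclideanSpace ℝ (Fin n) from x) : ℝ)
          * (inner ℝ (sBasis W i) (WithLp.toLp 2 ((Wᴴ * W).mulVec x)) : ℝ) :=
        parseval_inner (sBasis W) _ _
    _ = ∑ i, sEig W i * (inner ℝ (sBasis W i) x : ℝ) ^ 2 := by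
        refine Finset.sum_congr rfl fun i _ => ?_
        rw [key i, pow_two]
        ring

end SortedSpectrum

private lemma mfnormSq_nonneg {I J : Type*} [Fintype I] [Fintype J] (M : Matrix I J ℝ) :
    0 ≤ mfnormSq M := by
  unfold mfnormSq
  positivity

private lemma mfnormSq_sub_comm {I J : Type*} [Fintype I] [Fintype J]
    (X Y : Matrix I J ℝ) : mfnormSq (X - Y) = mfnormSq (Y - X) := by
  unfold mfnormSq
  refine Finset.sum_congr rfl fun a _ => Finset.sum_congr rfl fun b _ => ?_
  simp only [Matrix.sub_apply]
  ring

private lemma tailSq_bddBelow {I J : Type*} [Fintype I] [Fintype J] (M : Matrix I J ℝ) (k : ℕ) :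
    BddBelow {x | ∃ C : Matrix I J ℝ, C.rank ≤ k ∧ x = mfnormSq (M - C)} := by
  refine ⟨0, ?_⟩
  rintro x ⟨C, -, rfl⟩
  exact mfnormSq_nonneg _

end Statement12Aux

section Statement12Main

open Matrix

private lemma tailSq_le_sum {p₁ n : ℕ} (W : Matrix (Fin p₁) (Fin n) ℝ) (k : ℕ) :
    tailSq W k ≤ ∑ i ∈ Finset.univ.filter (fun i : Fin n => i.val < n - k), sEig W i := by
  classical
  set v : Fin n → EuclideanSpace ℝ (Fin n) := fun i => sBasis W i with hv
  set s : Finset (Fin n) := Finset.univ.filter (fun i => n - k ≤ i.val) with hs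
  set C : Matrix (Fin p₁) (Fin n) ℝ := Matrix.of fun a b => ∑ i ∈ s, (W.mulVec (v i)) a * (v i) b
    with hC
  have hscard : s.card ≤ k := by
    have h1 := Finset.card_filter_add_card_filter_not
      (s := (Finset.univ : Finset (Fin n))) (p := fun i : Fin n => i.val < n - k)
    have h2 : (Finset.univ.filter (fun i : Fin n => i.val < n - k)).card = n - k :=
      card_filter_val_lt (Nat.sub_le n k)
    have h3 : (Finset.univ.filter (fun i : Fin n => ¬ i.val < n - k)) = s := by
      ext i
      simp only [hs, Finset.mem_filter, Finset.mem_univ, true_and]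
      omega
    rw [h2, h3, Finset.card_univ, Fintype.card_fin] at h1
    omega
  have hrank : C.rank ≤ k := by
    set X : Matrix (Fin p₁) {i // i ∈ s} ℝ := Matrix.of fun a i => W.mulVec (v i.1) a with hX
    set Y : Matrix {i // i ∈ s} (Fin n) ℝ := Matrix.of fun i b => (v i.1) b with hY
    have hCXY : C = X * Y := by
      ext a b
      rw [Matrix.mul_apply]
      simp only [hC, hX, hY, Matrix.of_apply]
      exact (Finset.sum_coe_sort s (fun i => W.mulVec (v i) a * (v i) b)).symm
    calc C.rank = (X * Y).rank := by rw [hCXY]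
      _ ≤ X.rank := Matrix.rank_mul_le_left X Y
      _ ≤ Fintype.card {i // i ∈ s} := Matrix.rank_le_card_width X
      _ = s.card := Fintype.card_coe s
      _ ≤ k := hscard
  have hCv : ∀ j, C.mulVec (v j) = if j ∈ s then W.mulVec (v j) else 0 := by
    intro j
    ext a
    show ∑ b, C a b * (v j) b = _
    calc ∑ b, (∑ i ∈ s, (W.mulVec (v i)) a * (v i) b) * (v j) b
        = ∑ i ∈ s, (W.mulVec (v i)) a * (∑ b, (v i) b * (v j) b) := by
          simp_rw [Finset.sum_mul]
          rw [Finset.sum_comm]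
          refine Finset.sum_congr rfl fun i _ => ?_
          rw [Finset.mul_sum]
          refine Finset.sum_congr rfl fun b _ => ?_
          ring
      _ = ∑ i ∈ s, (W.mulVec (v i)) a * (if i = j then 1 else 0) := by
          refine Finset.sum_congr rfl fun i _ => ?_
          rw [sBasis_dot W i j]
      _ = if j ∈ s then (W.mulVec (v j)) a else 0 := by
          simp only [mul_ite, mul_one, mul_zero]
          exact Finset.sum_ite_eq' s j (fun i => (W.mulVec (v i)) a)
    · by_cases hj : j ∈ s <;> simp [hj]
  have hval : mfnormSq (W - C)
      = ∑ i ∈ Finset.univ.filter (fun i : Fin n => i.val < n - k), sEig W i := by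
    rw [← sum_sq_mulVec_eq (W - C) (sBasis W)]
    calc ∑ j, ∑ a, ((W - C).mulVec (sBasis W j)) a ^ 2
        = ∑ j, (if j ∈ s then 0 else ∑ a, (W.mulVec (v j)) a ^ 2) := by
          refine Finset.sum_congr rfl fun j _ => ?_
          rw [Matrix.sub_mulVec, hCv j]
          by_cases hj : j ∈ s
          · simp [hj, hv]
          · simp [hj, hv]
      _ = ∑ j, (if j ∉ s then ∑ a, (W.mulVec (v j)) a ^ 2 else 0) := by
          refine Finset.sum_congr rfl fun j _ => ?_
          by_cases hj : j ∈ s <;> simp [hj]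
      _ = ∑ j ∈ Finset.univ.filter (fun j => j ∉ s), ∑ a, (W.mulVec (v j)) a ^ 2 :=
          (Finset.sum_filter _ _).symm
      _ = ∑ i ∈ Finset.univ.filter (fun i : Fin n => i.val < n - k), sEig W i := by
          refine Finset.sum_congr ?_ fun i _ => sEig_eq W i
          ext i
          simp only [hs, Finset.mem_filter, Finset.mem_univ, true_and]
          omega
  exact csInf_le (tailSq_bddBelow W k) ⟨C, hrank, hval.symm⟩

private lemma sum_le_tailSq {p₁ n : ℕ} (W : Matrix (Fin p₁) (Fin n) ℝ) (k : ℕ) :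
    ∑ i ∈ Finset.univ.filter (fun i : Fin n => i.val < n - k), sEig W i ≤ tailSq W k := by
  classical
  apply le_csInf
  · exact ⟨mfnormSq (W - 0), 0, by simp [Matrix.rank_zero], rfl⟩
  rintro x ⟨C, hCk, rfl⟩
  -- kernel of C, as a subspace of Euclidean space
  set e : EuclideanSpace ℝ (Fin n) ≃ₗ[ℝ] (Fin n → ℝ) := WithLp.linearEquiv 2 ℝ (Fin n → ℝ)
    with he
  set L : EuclideanSpace ℝ (Fin n) →ₗ[ℝ] (Fin p₁ → ℝ) := C.mulVecLin ∘ₗ e.toLinearMap with hL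
  set K : Submodule ℝ (EuclideanSpace ℝ (Fin n)) := LinearMap.ker L with hK
  have hdim : n - k ≤ Module.finrank ℝ K := by
    have h2 := LinearMap.finrank_range_add_finrank_ker L
    have hrange : LinearMap.range L = LinearMap.range C.mulVecLin := by
      rw [hL, LinearMap.range_comp, LinearEquiv.range, Submodule.map_top]
    have h3 : Module.finrank ℝ (LinearMap.range L) = C.rank := by
      rw [hrange]; rfl
    have h4 : Module.finrank ℝ (EuclideanSpace ℝ (Fin n)) = n := by
      rw [finrank_euclideanSpace, Fintype.card_fin]
    have h5 : C.rank ≤ k := hCk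
    rw [h3, h4, ← hK] at h2
    omega
  set m₀ := Module.finrank ℝ K with hm₀
  set ob := stdOrthonormalBasis ℝ K with hob
  set u : Fin m₀ → EuclideanSpace ℝ (Fin n) := fun j => (ob j : EuclideanSpace ℝ (Fin n))
    with hu'
  have hu : Orthonormal ℝ u := by
    rw [orthonormal_iff_ite]
    intro i j
    have h := orthonormal_iff_ite.mp ob.orthonormal i j
    rwa [Submodule.coe_inner] at h
  have hker : ∀ j, C.mulVec (u j) = 0 := by
    intro j
    have hj : (u j) ∈ K := (ob j).2
    exact hj
  set c : Fin n → ℝ := fun i => ∑ j, (inner ℝ (sBasis W i) (u j) : ℝ) ^ 2 with hc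
  have hc0 : ∀ i, 0 ≤ c i := by
    intro i
    exact Finset.sum_nonneg fun j _ => sq_nonneg _
  have hc1 : ∀ i, c i ≤ 1 := by
    intro i
    have h := bessel_sq hu (sBasis W i)
    have h2 : ∑ b, (sBasis W i) b ^ 2 = 1 := by
      have := sBasis_dot W i i
      simpa [pow_two] using this
    calc c i = ∑ j, (inner ℝ (u j) (sBasis W i) : ℝ) ^ 2 := by
          refine Finset.sum_congr rfl fun j _ => ?_
          rw [real_inner_comm]
      _ ≤ ∑ b, (sBasis W i) b ^ 2 := h
      _ = 1 := h2
  have hcsum : ((n - k : ℕ) : ℝ) ≤ ∑ i, c i := by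
    have hsum : ∑ i, c i = (m₀ : ℝ) := by
      rw [hc, Finset.sum_comm]
      have huj : ∀ j, ∑ i, (inner ℝ (sBasis W i) (u j) : ℝ) ^ 2 = 1 := by
        intro j
        rw [parseval_sq (sBasis W) (u j)]
        have h := orthonormal_iff_ite.mp hu j j
        rw [if_pos rfl, inner_eq_dot] at h
        calc ∑ b, (u j) b ^ 2 = ∑ b, (u j) b * (u j) b := by simp [pow_two]
          _ = 1 := h
      calc ∑ j : Fin m₀, ∑ i : Fin n, (inner ℝ (sBasis W i) (u j) : ℝ) ^ 2
          = ∑ _j : Fin m₀, (1:ℝ) := Finset.sum_congr rfl fun j _ => huj j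
        _ = (m₀ : ℝ) := by simp
    rw [hsum]
    exact_mod_cast hdim
  calc ∑ i ∈ Finset.univ.filter (fun i : Fin n => i.val < n - k), sEig W i
      ≤ ∑ i, sEig W i * c i :=
        comb_ineq (sEig W) c (sEig_mono W) (sEig_nonneg W) hc0 hc1 (n - k)
          (Nat.sub_le n k) hcsum
    _ = ∑ j, ∑ i, sEig W i * (inner ℝ (sBasis W i) (u j) : ℝ) ^ 2 := by
        rw [Finset.sum_comm]
        refine Finset.sum_congr rfl fun i _ => ?_
        rw [hc, Finset.mul_sum]
    _ = ∑ j, ∑ a, (W.mulVec (u j)) a ^ 2 := by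
        refine Finset.sum_congr rfl fun j _ => ?_
        exact (quad_expand W (u j)).symm
    _ = ∑ j, ∑ a, ((W - C).mulVec (u j)) a ^ 2 := by
        refine Finset.sum_congr rfl fun j _ => ?_
        rw [Matrix.sub_mulVec, hker j, sub_zero]
    _ ≤ mfnormSq (W - C) := sum_sq_mulVec_le (W - C) hu

private lemma tailSq_eq_sum {p₁ n : ℕ} (W : Matrix (Fin p₁) (Fin n) ℝ) (k : ℕ) :
    tailSq W k = ∑ i ∈ Finset.univ.filter (fun i : Fin n => i.val < n - k), sEig W i :=
  le_antisymm (tailSq_le_sum W k) (sum_le_tailSq W k)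

end Statement12Main


/-- Let `W, A ∈ ℝ^{p_1×p_2}` with `rank(A) ≤ r`, `rank(W) = r''`,
and `r < r' < r''`.  If `P` is a best rank-`r'` approximation of `W` in Frobenius norm
(as the truncated SVD is, by the Eckart–Young theorem), then
`‖P − W‖_F² ≤ ((r''−r')/(r''−r))·‖A − W‖_F²`. -/
theorem statement12 {p₁ p₂ : ℕ} (W A P : Matrix (Fin p₁) (Fin p₂) ℝ)
    {r r' r'' : ℕ} (hA : A.rank ≤ r) (hW : W.rank = r'')
    (h1 : r < r') (h2 : r' < r'')
    (hPrank : P.rank ≤ r')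
    (hPbest : ∀ B : Matrix (Fin p₁) (Fin p₂) ℝ, B.rank ≤ r' →
      mfnorm (P - W) ≤ mfnorm (B - W)) :
    mfnorm (P - W) ^ 2 ≤ (((r'' : ℝ) - r') / ((r'' : ℝ) - r)) * mfnorm (A - W) ^ 2 := by
  classical
  have hfin : ∀ M : Matrix (Fin p₁) (Fin p₂) ℝ, mfnorm M ^ 2 = mfnormSq M := fun M =>
    Real.sq_sqrt (mfnormSq_nonneg M)
  rw [hfin, hfin]
  set ν : Fin p₂ → ℝ := sEig W with hν
  set S : ℕ → ℝ :=
    fun k => ∑ i ∈ Finset.univ.filter (fun i : Fin p₂ => i.val < p₂ - k), ν i with hS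
  have hts : ∀ k, tailSq W k = S k := fun k => tailSq_eq_sum W k
  have hrn : r'' ≤ p₂ := by
    rw [← hW]
    calc W.rank ≤ Fintype.card (Fin p₂) := Matrix.rank_le_card_width W
      _ = p₂ := Fintype.card_fin p₂
  -- the tail vanishes beyond the rank
  have ht0 : S r'' = 0 := by
    have h0 : mfnormSq (W - W) = 0 := by
      simp [mfnormSq]
    have hle : tailSq W r'' ≤ 0 := csInf_le (tailSq_bddBelow W r'') ⟨W, hW.le, h0.symm⟩
    have hge : 0 ≤ S r'' :=
      Finset.sum_nonneg fun i _ => sEig_nonneg W i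
    have := hts r''
    linarith
  have hzero : ∀ i : Fin p₂, i.val < p₂ - r'' → ν i = 0 := by
    intro i hi
    have := (Finset.sum_eq_zero_iff_of_nonneg
      (fun i _ => sEig_nonneg W i)).mp ht0 i (by simp [hi])
    exact this
  -- squared-distance facts
  have hP : mfnormSq (P - W) ≤ S r' := by
    rw [← hts]
    apply le_csInf
    · exact ⟨mfnormSq (W - 0), 0, by simp [Matrix.rank_zero], rfl⟩
    rintro x ⟨B, hB, rfl⟩
    have hb := hPbest B hB
    have h1' : mfnorm (P - W) ^ 2 ≤ mfnorm (B - W) ^ 2 := by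
      have h0 : 0 ≤ mfnorm (P - W) := Real.sqrt_nonneg _
      nlinarith
    rw [hfin, hfin] at h1'
    rw [mfnormSq_sub_comm W B]
    exact h1'
  have hA' : S r ≤ mfnormSq (A - W) := by
    rw [← hts]
    exact csInf_le (tailSq_bddBelow W r) ⟨A, hA, mfnormSq_sub_comm A W⟩
  -- the core inequality  (r'' - r) * S r' ≤ (r'' - r') * S r
  have hbn : p₂ - r' < p₂ := by omega
  set θ := ν ⟨p₂ - r', hbn⟩ with hθ
  have hθ0 : 0 ≤ θ := sEig_nonneg W _
  have hSr' : S r' = ∑ i ∈ Finset.univ.filter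
      (fun i : Fin p₂ => p₂ - r'' ≤ i.val ∧ i.val < p₂ - r'), ν i := by
    simp only [hS]
    rw [sum_filter_split (a := p₂ - r'') (by omega) ν]
    have hz : ∑ i ∈ Finset.univ.filter (fun i : Fin p₂ => i.val < p₂ - r''), ν i = 0 := by
      refine Finset.sum_eq_zero fun i hi => ?_
      simp only [Finset.mem_filter, Finset.mem_univ, true_and] at hi
      exact hzero i hi
    rw [hz, zero_add]
  have hSr : S r = S r' + ∑ i ∈ Finset.univ.filter
      (fun i : Fin p₂ => p₂ - r' ≤ i.val ∧ i.val < p₂ - r), ν i := by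
    simp only [hS]
    rw [sum_filter_split (a := p₂ - r') (by omega) ν]
  have hE1 : S r' ≤ ((r'' - r' : ℕ) : ℝ) * θ := by
    rw [hSr']
    have hcard : (Finset.univ.filter
        (fun i : Fin p₂ => p₂ - r'' ≤ i.val ∧ i.val < p₂ - r')).card = r'' - r' := by
      rw [card_filter_ico (by omega) (by omega)]
      omega
    calc ∑ i ∈ Finset.univ.filter
            (fun i : Fin p₂ => p₂ - r'' ≤ i.val ∧ i.val < p₂ - r'), ν i
        ≤ (Finset.univ.filter
            (fun i : Fin p₂ => p₂ - r'' ≤ i.val ∧ i.val < p₂ - r')).card • θ := by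
          refine Finset.sum_le_card_nsmul _ _ _ fun i hi => ?_
          simp only [Finset.mem_filter, Finset.mem_univ, true_and] at hi
          exact sEig_mono W (by rw [Fin.le_def]; simp; omega)
      _ = ((r'' - r' : ℕ) : ℝ) * θ := by rw [hcard, nsmul_eq_mul]
  have hE2 : ((r' - r : ℕ) : ℝ) * θ ≤ ∑ i ∈ Finset.univ.filter
      (fun i : Fin p₂ => p₂ - r' ≤ i.val ∧ i.val < p₂ - r), ν i := by
    have hcard : (Finset.univ.filter
        (fun i : Fin p₂ => p₂ - r' ≤ i.val ∧ i.val < p₂ - r)).card = r' - r := by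
      rw [card_filter_ico (by omega) (by omega)]
      omega
    calc ((r' - r : ℕ) : ℝ) * θ
        = (Finset.univ.filter
            (fun i : Fin p₂ => p₂ - r' ≤ i.val ∧ i.val < p₂ - r)).card • θ := by
          rw [hcard, nsmul_eq_mul]
      _ ≤ ∑ i ∈ Finset.univ.filter
            (fun i : Fin p₂ => p₂ - r' ≤ i.val ∧ i.val < p₂ - r), ν i := by
          refine Finset.card_nsmul_le_sum _ _ _ fun i hi => ?_
          simp only [Finset.mem_filter, Finset.mem_univ, true_and] at hi
          exact sEig_mono W (by rw [Fin.le_def]; simp; omega)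
  have hρ1 : ((r'' - r' : ℕ) : ℝ) = (r'' : ℝ) - r' := by
    rw [Nat.cast_sub h2.le]
  have hρ2 : ((r' - r : ℕ) : ℝ) = (r' : ℝ) - r := by
    rw [Nat.cast_sub h1.le]
  have hcore : ((r'' : ℝ) - r) * S r' ≤ ((r'' : ℝ) - r') * S r := by
    set E2 := ∑ i ∈ Finset.univ.filter
      (fun i : Fin p₂ => p₂ - r' ≤ i.val ∧ i.val < p₂ - r), ν i with hE2'
    rw [hρ1] at hE1
    rw [hρ2] at hE2
    have hp1 : (0:ℝ) < (r'' : ℝ) - r' := by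
      have : (r' : ℝ) < r'' := by exact_mod_cast h2
      linarith
    have hp2 : (0:ℝ) < (r' : ℝ) - r := by
      have : (r : ℝ) < r' := by exact_mod_cast h1
      linarith
    rw [hSr]
    nlinarith [mul_le_mul_of_nonneg_left hE1 hp2.le, mul_le_mul_of_nonneg_left hE2 hp1.le]
  -- assembling
  have hd : (0:ℝ) < (r'' : ℝ) - r := by
    have : (r : ℝ) < r'' := by exact_mod_cast h1.trans h2
    linarith
  have hp1' : (0:ℝ) ≤ (r'' : ℝ) - r' := by
    have : (r' : ℝ) ≤ r'' := by exact_mod_cast h2.le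
    linarith
  rw [div_mul_eq_mul_div, le_div_iff₀ hd]
  have hSr'0 : 0 ≤ S r' := Finset.sum_nonneg fun i _ => sEig_nonneg W i
  calc mfnormSq (P - W) * ((r'' : ℝ) - r) ≤ S r' * ((r'' : ℝ) - r) :=
        mul_le_mul_of_nonneg_right hP hd.le
    _ = ((r'' : ℝ) - r) * S r' := mul_comm _ _
    _ ≤ ((r'' : ℝ) - r') * S r := hcore
    _ ≤ ((r'' : ℝ) - r') * mfnormSq (A - W) := mul_le_mul_of_nonneg_left hA' hp1'


end TTpaper
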